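/- arXiv:1202.6049 — 2 statements merged into one kernel-verified Lean document; each statement's English description precedes it below -/
import Mathlib

section
/- If ρ((jωE − A_D − GC)^{-1} A_C) < 1 for all ω ∈ ℝ and the pencil (E, A_D + GC) is regular and Hurwitz, then the pencil (E, A_D + A_C + GC) has no generalized eigenvalues on the imaginary axis. -/
open Matrix

/-- If the pencil `(E, A_D + GC)` is regular and Hurwitz and
`ρ((jωE − A_D − GC)⁻¹ A_C) < 1` for all real `ω`, then the pencil
`(E, A_D + A_C + GC)` has no generalized eigenvalues on the imaginary axis. -/
theorem stmt11 {n p : ℕ}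
    (E AD AC : Matrix (Fin n) (Fin n) ℝ)
    (G : Matrix (Fin n) (Fin p) ℝ) (C : Matrix (Fin p) (Fin n) ℝ)
    (hreg : ∃ s : ℂ,
      (s • E.map Complex.ofReal -
        (AD.map Complex.ofReal + G.map Complex.ofReal * C.map Complex.ofReal)).det ≠ 0)
    (hHurwitz : ∀ s : ℂ,
      (s • E.map Complex.ofReal -
        (AD.map Complex.ofReal + G.map Complex.ofReal * C.map Complex.ofReal)).det = 0 →
      s.re < 0)
    (hρ : ∀ ω : ℝ, ∀ μ ∈ spectrum ℂ
        (((Complex.I * ω) • E.map Complex.ofReal -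
            AD.map Complex.ofReal -
            G.map Complex.ofReal * C.map Complex.ofReal)⁻¹ *
          AC.map Complex.ofReal), ‖μ‖ < 1) :
    ∀ ω : ℝ,
      ((Complex.I * ω) • E.map Complex.ofReal -
        (AD.map Complex.ofReal + AC.map Complex.ofReal +
          G.map Complex.ofReal * C.map Complex.ofReal)).det ≠ 0 := by
  intro ω hdet
  set M : Matrix (Fin n) (Fin n) ℂ :=
    (Complex.I * ω) • E.map Complex.ofReal -
      AD.map Complex.ofReal - G.map Complex.ofReal * C.map Complex.ofReal with hM
  have hMdet : M.det ≠ 0 := by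
    intro h
    have := hHurwitz (Complex.I * ω) (by
      rw [← h]; congr 1; rw [hM]; noncomm_ring)
    simp [Complex.mul_re] at this
  have hMunit : IsUnit M := (Matrix.isUnit_iff_isUnit_det M).2 (isUnit_iff_ne_zero.2 hMdet)
  have hfact : (Complex.I * ω) • E.map Complex.ofReal -
      (AD.map Complex.ofReal + AC.map Complex.ofReal +
        G.map Complex.ofReal * C.map Complex.ofReal)
      = M * (1 - M⁻¹ * AC.map Complex.ofReal) := by
    rw [mul_sub, mul_one, ← mul_assoc, Matrix.mul_nonsing_inv M (isUnit_iff_ne_zero.2 hMdet), one_mul, hM]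
    noncomm_ring
  rw [hfact, Matrix.det_mul] at hdet
  have h2 : (1 - M⁻¹ * AC.map Complex.ofReal).det = 0 := by
    rcases mul_eq_zero.1 hdet with h | h
    · exact absurd h hMdet
    · exact h
  have h1 : (1 : ℂ) ∈ spectrum ℂ (M⁻¹ * AC.map Complex.ofReal) := by
    rw [spectrum.mem_iff]
    intro hu
    have : IsUnit (1 - M⁻¹ * AC.map Complex.ofReal) := by
      simpa using hu
    rw [Matrix.isUnit_iff_isUnit_det, isUnit_iff_ne_zero] at this
    exact this h2
  have := hρ ω 1 (by simpa [hM] using h1)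
  simp at this
end

section
/- Let V* be the largest (A, B)-controlled invariant subspace contained in Ker(C): i.e., V* is the maximal subspace V with A V ⊆ V + Im(B) and V ⊆ Ker(C). Then for every x₀ ∈ V* there exists a feedback matrix F with (A + BF)V* ⊆ V* and V* ⊆ Ker C, so that the solution x(t) = e^{(A+BF)t} x₀ satisfies C x(t) = 0 for all t ≥ 0. -/
open Matrix

attribute [local instance] Matrix.linftyOpNormedRing Matrix.linftyOpNormedAlgebra


theorem friend {n m : ℕ} (A : Matrix (Fin n) (Fin n) ℝ) (B : Matrix (Fin n) (Fin m) ℝ)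
    (V : Submodule ℝ (Fin n → ℝ))
    (hinv : Submodule.map A.mulVecLin V ≤ V ⊔ LinearMap.range B.mulVecLin) :
    ∃ F : Matrix (Fin m) (Fin n) ℝ, Submodule.map (A + B * F).mulVecLin V ≤ V := by
  obtain ⟨W, hW⟩ := Submodule.exists_isCompl V
  let b := Module.Basis.ofVectorSpace ℝ V
  have hb : ∀ i, A.mulVecLin (b i) ∈ V ⊔ LinearMap.range B.mulVecLin := fun i =>
    hinv ⟨b i, (b i).2, rfl⟩
  choose w hw u hu heq using fun i => Submodule.mem_sup.mp (hb i)
  choose uu huu using hu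
  let g : V →ₗ[ℝ] (Fin m → ℝ) := b.constr ℝ fun i => -(uu i)
  let π := V.projectionOnto W hW
  let F := LinearMap.toMatrix' (g ∘ₗ π)
  refine ⟨F, ?_⟩
  rintro _ ⟨x, hx, rfl⟩
  have hF : ∀ y : Fin n → ℝ, F *ᵥ y = g (π y) := fun y => by
    rw [show F *ᵥ y = Matrix.toLin' F y from (Matrix.toLin'_apply _ _).symm,
      Matrix.toLin'_toMatrix']; rfl
  have key : ∀ v : V, A *ᵥ (v : Fin n → ℝ) + B *ᵥ (g v) ∈ V := by
    have hle : (⊤ : Submodule ℝ V) ≤ Submodule.comap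
        ((A.mulVecLin ∘ₗ V.subtype) + (B.mulVecLin ∘ₗ g)) V := by
      rw [← b.span_eq]
      apply Submodule.span_le.mpr
      rintro _ ⟨i, rfl⟩
      simp only [SetLike.mem_coe, Submodule.mem_comap]
      simp only [LinearMap.add_apply, LinearMap.coe_comp, Function.comp_apply,
        Submodule.coe_subtype]
      have hg : g (b i) = -(uu i) := b.constr_basis ℝ _ i
      have h1 : A.mulVecLin (b i) = w i + B.mulVecLin (uu i) := by
        rw [huu]; exact (heq i).symm
      rw [hg, map_neg, h1]
      have : w i + B.mulVecLin (uu i) + -(B.mulVecLin (uu i)) = w i := by abel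
      rw [this]; exact hw i
    intro v
    have := hle (Submodule.mem_top (x := v))
    simpa using this
  have hkey := key ⟨x, hx⟩
  have hmv : (A + B * F).mulVecLin x = A *ᵥ x + B *ᵥ (F *ᵥ x) := by
    simp [Matrix.mulVecLin_apply, Matrix.add_mulVec, ← Matrix.mulVec_mulVec]
  rw [hmv, hF]
  have hπ : π x = ⟨x, hx⟩ := Submodule.projectionOnto_apply_left hW ⟨x, hx⟩
  rw [hπ]
  exact hkey

theorem expinv {n : ℕ} (M : Matrix (Fin n) (Fin n) ℝ)
    (V : Submodule ℝ (Fin n → ℝ)) (hV : Submodule.map M.mulVecLin V ≤ V)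
    (x : Fin n → ℝ) (hx : x ∈ V) : (NormedSpace.exp M) *ᵥ x ∈ V := by
  have hpow : ∀ k : ℕ, (M ^ k) *ᵥ x ∈ V := by
    intro k
    induction k with
    | zero => simpa using hx
    | succ k ih =>
      rw [pow_succ', ← Matrix.mulVec_mulVec]
      exact hV ⟨_, ih, rfl⟩
  let L : Matrix (Fin n) (Fin n) ℝ →L[ℝ] (Fin n → ℝ) :=
    { toLinearMap :=
        { toFun := fun N => N *ᵥ x
          map_add' := fun N₁ N₂ => Matrix.add_mulVec _ _ _
          map_smul' := fun c N => Matrix.smul_mulVec c N x }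
      cont := Continuous.matrix_mulVec continuous_id continuous_const }
  have hsum : Summable fun k : ℕ => (k.factorial : ℝ)⁻¹ • M ^ k :=
    NormedSpace.expSeries_summable' M
  have heq : (NormedSpace.exp M) *ᵥ x = ∑' k : ℕ, L ((k.factorial : ℝ)⁻¹ • M ^ k) := by
    have : (NormedSpace.exp M) *ᵥ x = L (NormedSpace.exp M) := rfl
    rw [this, NormedSpace.exp_eq_tsum ℝ]
    exact L.map_tsum hsum
  rw [heq]
  have hclosed : IsClosed (V : Set (Fin n → ℝ)) := Submodule.closed_of_finiteDimensional V
  have hsum2 : Summable fun k : ℕ => L ((k.factorial : ℝ)⁻¹ • M ^ k) := hsum.map L L.continuous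
  have htend := hsum2.hasSum.tendsto_sum_nat
  refine hclosed.mem_of_tendsto htend (Filter.Eventually.of_forall fun N => ?_)
  exact Submodule.sum_mem V fun k _ => by
    simpa [L, Matrix.smul_mulVec] using V.smul_mem ((k.factorial : ℝ)⁻¹) (hpow k)


/-- For the maximal `(A,B)`-controlled invariant subspace `V*` contained in
`Ker C`, every initial state `x₀ ∈ V*` admits a friend `F` with
`(A + BF) V* ⊆ V*`, `V* ⊆ Ker C`, and the resulting closed-loop trajectory
`x(t) = e^{(A+BF)t} x₀` produces zero output for all `t ≥ 0`. -/
theorem stmt17 {n m p : ℕ}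
    (A : Matrix (Fin n) (Fin n) ℝ) (B : Matrix (Fin n) (Fin m) ℝ)
    (C : Matrix (Fin p) (Fin n) ℝ)
    (Vstar : Submodule ℝ (Fin n → ℝ))
    (hinv : Submodule.map A.mulVecLin Vstar ≤ Vstar ⊔ LinearMap.range B.mulVecLin)
    (hker : Vstar ≤ LinearMap.ker C.mulVecLin)
    (hmax : ∀ V : Submodule ℝ (Fin n → ℝ),
      Submodule.map A.mulVecLin V ≤ V ⊔ LinearMap.range B.mulVecLin →
      V ≤ LinearMap.ker C.mulVecLin → V ≤ Vstar) :
    ∀ x₀ ∈ Vstar, ∃ F : Matrix (Fin m) (Fin n) ℝ,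
      Submodule.map (A + B * F).mulVecLin Vstar ≤ Vstar ∧
      Vstar ≤ LinearMap.ker C.mulVecLin ∧
      ∀ t : ℝ, 0 ≤ t →
        C *ᵥ ((NormedSpace.exp (t • (A + B * F))) *ᵥ x₀) = 0 := by
  intro x₀ hx₀
  obtain ⟨F, hF⟩ := friend A B Vstar hinv
  refine ⟨F, hF, hker, fun t ht => ?_⟩
  have hsmul : Submodule.map (t • (A + B * F)).mulVecLin Vstar ≤ Vstar := by
    rintro _ ⟨x, hx, rfl⟩
    have : (t • (A + B * F)).mulVecLin x = t • ((A + B * F).mulVecLin x) := by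
      simp [Matrix.mulVecLin_apply, Matrix.smul_mulVec]
    rw [this]
    exact Vstar.smul_mem t (hF ⟨x, hx, rfl⟩)
  have hmem := expinv (t • (A + B * F)) Vstar hsmul x₀ hx₀
  have := hker hmem
  simpa [Matrix.mulVecLin_apply] using this
end
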